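/- Let ℓ₁,…,ℓₙ : ℝ^d → ℝ (n ≥ 2) be differentiable, L-Lipschitz functions with ‖∇ℓⱼ(w)‖ ≤ L for all w and all j. Define f_S = (1/n)·Σ_{j=1}^n ℓⱼ and, for a fixed i, f_{S^i} = (1/(n−1))·Σ_{j≠i} ℓⱼ, and suppose both attain their infima and both satisfy the PL condition with parameter μ > 0. Let w₁* be a global minimizer of f_S, w₂* a global minimizer of f_{S^i}, and let w₁, w₂ ∈ ℝ^d satisfy ‖w₁ − w₁*‖ ≤ ε and ‖w₂ − w₂*‖ ≤ ε. Then |ℓᵢ(w₁) − ℓᵢ(w₂)| ≤ 2Lε + L²/(μn) + L²/(μ(n−1)). -/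

import Mathlib

open Finset

/-- **Pointwise hypothesis stability under PL, Case 1 (iterates near minimizers).**
With Lipschitz losses and the PL condition on both `f_S` and `f_{S^i}`, outputs `w₁, w₂`
within `ε` of the respective global minimizers `w₁*, w₂*` satisfy
`|ℓᵢ(w₁) − ℓᵢ(w₂)| ≤ 2Lε + L²/(μn) + L²/(μ(n−1))`. -/
theorem pl_pointwise_stability_case1 (d n : ℕ) (hn : 2 ≤ n) (i : Fin n) (L μ ε : ℝ)
    (ℓ : Fin n → EuclideanSpace ℝ (Fin d) → ℝ)
    (hdiff : ∀ j, Differentiable ℝ (ℓ j))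
    (hlip : ∀ j x y, |ℓ j x - ℓ j y| ≤ L * ‖x - y‖)
    (hgrad : ∀ j w, ‖gradient (ℓ j) w‖ ≤ L)
    (hμ : 0 < μ)
    (fS fSi : EuclideanSpace ℝ (Fin d) → ℝ)
    (hfS : fS = fun w => (1 / (n : ℝ)) * ∑ j, ℓ j w)
    (hfSi : fSi = fun w => (1 / ((n : ℝ) - 1)) * ∑ j ∈ univ.erase i, ℓ j w)
    (w₁s w₂s : EuclideanSpace ℝ (Fin d))
    (hw₁s : ∀ y, fS w₁s ≤ fS y)
    (hw₂s : ∀ y, fSi w₂s ≤ fSi y)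
    (hPLS : ∀ x, μ * (fS x - fS w₁s) ≤ ‖gradient fS x‖ ^ 2)
    (hPLSi : ∀ x, μ * (fSi x - fSi w₂s) ≤ ‖gradient fSi x‖ ^ 2)
    (w₁ w₂ : EuclideanSpace ℝ (Fin d))
    (hw₁ : ‖w₁ - w₁s‖ ≤ ε)
    (hw₂ : ‖w₂ - w₂s‖ ≤ ε) :
    |ℓ i w₁ - ℓ i w₂| ≤ 2 * L * ε + L ^ 2 / (μ * n) + L ^ 2 / (μ * ((n : ℝ) - 1)) := by
  have hN : (0:ℝ) < n := by exact_mod_cast Nat.lt_of_lt_of_le Nat.zero_lt_two hn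
  have hN1 : (0:ℝ) < (n:ℝ) - 1 := by
    have : (2:ℝ) ≤ n := by exact_mod_cast hn
    linarith
  have hL : 0 ≤ L := le_trans (norm_nonneg _) (hgrad i w₁)
  -- gradient norm = fderiv norm
  have hgfd : ∀ (f : EuclideanSpace ℝ (Fin d) → ℝ) x, ‖gradient f x‖ = ‖fderiv ℝ f x‖ := by
    intro f x
    rw [gradient]
    exact LinearIsometryEquiv.norm_map _ _
  have hgrad' : ∀ j w, ‖fderiv ℝ (ℓ j) w‖ ≤ L := by
    intro j w
    rw [← hgfd]; exact hgrad j w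
  -- fderiv formulas
  have hsumdiff : ∀ (s : Finset (Fin n)), Differentiable ℝ (fun w => ∑ j ∈ s, ℓ j w) :=
    fun s => Differentiable.fun_sum (fun j _ => hdiff j)
  have hdfS : ∀ x, fderiv ℝ fS x = (1 / (n:ℝ)) • ∑ j, fderiv ℝ (ℓ j) x := by
    intro x
    rw [hfS, fderiv_const_mul ((hsumdiff univ) x), fderiv_fun_sum (fun j _ => (hdiff j) x)]
  have hdfSi : ∀ x, fderiv ℝ fSi x
      = (1 / ((n:ℝ) - 1)) • ∑ j ∈ univ.erase i, fderiv ℝ (ℓ j) x := by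
    intro x
    rw [hfSi, fderiv_const_mul ((hsumdiff _) x), fderiv_fun_sum (fun j _ => (hdiff j) x)]
  -- fderivs vanish at the minimizers
  have hd1 : fderiv ℝ fS w₁s = 0 :=
    (IsLocalMin.fderiv_eq_zero (Filter.Eventually.of_forall hw₁s))
  have hd2 : fderiv ℝ fSi w₂s = 0 :=
    (IsLocalMin.fderiv_eq_zero (Filter.Eventually.of_forall hw₂s))
  have hsum1 : ∑ j, fderiv ℝ (ℓ j) w₁s = 0 := by
    have := hdfS w₁s
    rw [hd1] at this
    have h := this.symm
    rcases smul_eq_zero.mp h with h' | h'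
    · exact absurd h' (by positivity)
    · exact h'
  have hsum2 : ∑ j ∈ univ.erase i, fderiv ℝ (ℓ j) w₂s = 0 := by
    have := hdfSi w₂s
    rw [hd2] at this
    rcases smul_eq_zero.mp this.symm with h' | h'
    · exact absurd h' (by positivity)
    · exact h'
  -- key split of the total sum
  have hsplit : ∀ (g : Fin n → ContinuousLinearMap (RingHom.id ℝ) (EuclideanSpace ℝ (Fin d)) ℝ),
      ∑ j, g j = ∑ j ∈ univ.erase i, g j + g i :=
    fun g => (Finset.sum_erase_add _ _ (mem_univ i)).symm
  -- gradient of fS at w₂s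
  have hgS : ‖gradient fS w₂s‖ ≤ L / n := by
    rw [hgfd, hdfS w₂s, hsplit, hsum2, zero_add, norm_smul]
    have : ‖(1 / (n:ℝ))‖ = 1 / (n:ℝ) := by
      rw [Real.norm_eq_abs, abs_of_pos (by positivity)]
    rw [this]
    calc 1 / (n:ℝ) * ‖fderiv ℝ (ℓ i) w₂s‖ ≤ 1 / (n:ℝ) * L := by
          exact mul_le_mul_of_nonneg_left (hgrad' i w₂s) (by positivity)
      _ = L / n := by ring
  -- gradient of fSi at w₁s
  have hgSi : ‖gradient fSi w₁s‖ ≤ L / ((n:ℝ) - 1) := by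
    have hkey : ∑ j ∈ univ.erase i, fderiv ℝ (ℓ j) w₁s = -fderiv ℝ (ℓ i) w₁s := by
      have h0 : (∑ j ∈ univ.erase i, fderiv ℝ (ℓ j) w₁s) + fderiv ℝ (ℓ i) w₁s = 0 :=
        ((hsplit (fun j => fderiv ℝ (ℓ j) w₁s)).symm).trans hsum1
      exact eq_neg_of_add_eq_zero_left h0
    rw [hgfd, hdfSi w₁s, hkey, norm_smul, norm_neg]
    have : ‖(1 / ((n:ℝ) - 1))‖ = 1 / ((n:ℝ) - 1) := by
      rw [Real.norm_eq_abs, abs_of_pos (by positivity)]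
    rw [this]
    calc 1 / ((n:ℝ)-1) * ‖fderiv ℝ (ℓ i) w₁s‖ ≤ 1 / ((n:ℝ)-1) * L :=
          mul_le_mul_of_nonneg_left (hgrad' i w₁s) (by positivity)
      _ = L / ((n:ℝ)-1) := by ring
  -- suboptimality gaps
  have hgap1 : fS w₂s - fS w₁s ≤ L^2 / (μ * n^2) := by
    have h1 := hPLS w₂s
    have h2 : ‖gradient fS w₂s‖ ^ 2 ≤ (L / n)^2 :=
      pow_le_pow_left₀ (norm_nonneg _) hgS 2
    have := le_trans h1 h2
    rw [div_pow] at this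
    have h3 : μ * (L^2 / (μ * (n:ℝ)^2)) = L^2 / (n:ℝ)^2 := by field_simp
    exact le_of_mul_le_mul_left (by rw [h3]; exact this) hμ
  have hgap2 : fSi w₁s - fSi w₂s ≤ L^2 / (μ * ((n:ℝ)-1)^2) := by
    have h1 := hPLSi w₁s
    have h2 : ‖gradient fSi w₁s‖ ^ 2 ≤ (L / ((n:ℝ)-1))^2 :=
      pow_le_pow_left₀ (norm_nonneg _) hgSi 2
    have := le_trans h1 h2
    rw [div_pow] at this
    have h3 : μ * (L^2 / (μ * ((n:ℝ)-1)^2)) = L^2 / ((n:ℝ)-1)^2 := by field_simp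
    exact le_of_mul_le_mul_left (by rw [h3]; exact this) hμ
  -- identity ℓ i = n * fS - (n-1) * fSi
  have hid : ∀ w, ℓ i w = (n:ℝ) * fS w - ((n:ℝ) - 1) * fSi w := by
    intro w
    rw [hfS, hfSi]
    simp only
    have hs : ∑ j, ℓ j w = ∑ j ∈ univ.erase i, ℓ j w + ℓ i w :=
      (Finset.sum_erase_add _ _ (mem_univ i)).symm
    have e1 : (n:ℝ) * (1 / (n:ℝ) * ∑ j, ℓ j w) = ∑ j, ℓ j w := by field_simp
    have e2 : ((n:ℝ)-1) * (1 / ((n:ℝ)-1) * ∑ j ∈ univ.erase i, ℓ j w)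
        = ∑ j ∈ univ.erase i, ℓ j w := by field_simp
    rw [e1, e2]
    linarith [hs]
  -- middle bound
  have hmid : |ℓ i w₁s - ℓ i w₂s| ≤ L^2 / (μ * n) + L^2 / (μ * ((n:ℝ)-1)) := by
    have e : ℓ i w₂s - ℓ i w₁s
        = (n:ℝ) * (fS w₂s - fS w₁s) + ((n:ℝ)-1) * (fSi w₁s - fSi w₂s) := by
      rw [hid w₁s, hid w₂s]; ring
    have nn1 : 0 ≤ fS w₂s - fS w₁s := by linarith [hw₁s w₂s]
    have nn2 : 0 ≤ fSi w₁s - fSi w₂s := by linarith [hw₂s w₁s]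
    have hub : ℓ i w₂s - ℓ i w₁s ≤ L^2 / (μ * n) + L^2 / (μ * ((n:ℝ)-1)) := by
      rw [e]
      have b1 : (n:ℝ) * (fS w₂s - fS w₁s) ≤ L^2 / (μ * n) := by
        calc (n:ℝ) * (fS w₂s - fS w₁s) ≤ (n:ℝ) * (L^2 / (μ * n^2)) :=
              mul_le_mul_of_nonneg_left hgap1 (le_of_lt hN)
          _ = L^2 / (μ * n) := by field_simp
      have b2 : ((n:ℝ)-1) * (fSi w₁s - fSi w₂s) ≤ L^2 / (μ * ((n:ℝ)-1)) := by
        calc ((n:ℝ)-1) * (fSi w₁s - fSi w₂s) ≤ ((n:ℝ)-1) * (L^2 / (μ * ((n:ℝ)-1)^2)) :=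
              mul_le_mul_of_nonneg_left hgap2 (le_of_lt hN1)
          _ = L^2 / (μ * ((n:ℝ)-1)) := by field_simp
      linarith
    have hlb : 0 ≤ ℓ i w₂s - ℓ i w₁s := by
      rw [e]; positivity
    rw [abs_sub_comm, abs_of_nonneg hlb]
    exact hub
  -- combine with Lipschitz
  have t1 : |ℓ i w₁ - ℓ i w₁s| ≤ L * ε :=
    le_trans (hlip i w₁ w₁s) (mul_le_mul_of_nonneg_left hw₁ hL)
  have t2 : |ℓ i w₂s - ℓ i w₂| ≤ L * ε :=
    le_trans (hlip i w₂s w₂) (by rw [norm_sub_rev]; exact mul_le_mul_of_nonneg_left hw₂ hL)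
  calc |ℓ i w₁ - ℓ i w₂|
      = |(ℓ i w₁ - ℓ i w₁s) + (ℓ i w₁s - ℓ i w₂s) + (ℓ i w₂s - ℓ i w₂)| := by ring_nf
    _ ≤ |ℓ i w₁ - ℓ i w₁s| + |ℓ i w₁s - ℓ i w₂s| + |ℓ i w₂s - ℓ i w₂| := abs_add_three _ _ _
    _ ≤ L * ε + (L^2 / (μ * n) + L^2 / (μ * ((n:ℝ)-1))) + L * ε := by
        exact add_le_add (add_le_add t1 hmid) t2
    _ = 2 * L * ε + L ^ 2 / (μ * n) + L ^ 2 / (μ * ((n:ℝ) - 1)) := by ring
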